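/- In the two-class two-queue M/M/1 example with λ_1 + λ_2 < 1, the gradient of U(p_1, p_2) vanishes at (1/2, 1/2): both partial derivatives ∂U/∂p_1 and ∂U/∂p_2 are zero at p_1 = p_2 = 1/2. -/

import Mathlib

private lemma aux_deriv (lam mu bet c K : ℝ)
    (hne : 1 - (lam * (1/2) + mu * (1/2)) ≠ 0)
    (hK : K = lam * bet + 2 * c) :
    HasDerivAt (fun p : ℝ =>
      (p * lam * bet + c) *
        ((1 - (lam * p + mu * (1/2)))⁻¹ - (1 - (lam * (1 - p) + mu * (1 - 1/2)))⁻¹)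
      + K * (1 - (lam * (1 - p) + mu * (1 - 1/2)))⁻¹) 0 (1/2) := by
  have hne2 : 1 - (lam * (1 - 1/2) + mu * (1 - 1/2)) ≠ 0 := by
    convert hne using 2; ring
  have hg1 : HasDerivAt (fun p : ℝ => 1 - (lam * p + mu * (1/2))) (-lam) (1/2) := by
    have := (((hasDerivAt_id (1/2 : ℝ)).const_mul lam).add_const (mu * (1/2))).const_sub 1
    simpa using this
  have hg2 : HasDerivAt (fun p : ℝ => 1 - (lam * (1 - p) + mu * (1 - 1/2))) lam (1/2) := by
    have h0 : HasDerivAt (fun p : ℝ => (1 : ℝ) - p) (-1) (1/2) := by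
      simpa using (hasDerivAt_id (1/2 : ℝ)).const_sub 1
    have := ((h0.const_mul lam).add_const (mu * (1 - 1/2))).const_sub 1
    simpa using this
  have hi1 := hg1.inv hne
  have hi2 := hg2.inv hne2
  have hlin : HasDerivAt (fun p : ℝ => p * lam * bet + c) (lam * bet) (1/2) := by
    have := ((hasDerivAt_id (1/2 : ℝ)).mul_const lam).mul_const bet |>.add_const c
    simpa using this
  have hmain := (hlin.mul (hi1.sub hi2)).add (hi2.const_mul K)
  convert hmain using 1
  case e'_4 => rfl
  case e'_5 => rfl
  case e'_8 => rfl
  simp only [Pi.sub_apply, Pi.inv_apply]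
  have hsq : (1 - (lam * (1/2) + mu * (1/2)))^2 ≠ 0 := pow_ne_zero _ hne
  have hval : (1 - (lam * (1 - 1/2) + mu * (1 - 1/2))) = (1 - (lam * (1/2) + mu * (1/2))) := by
    try ring
  rw [hval, hK]
  field_simp
  ring

/-- in the two-class two-queue M/M/1 example, both partial
derivatives of the social cost vanish at `(1/2, 1/2)`. -/
theorem social_cost_gradient_zero_at_half
    (lam1 lam2 beta1 beta2 : ℝ)
    (hlam1 : 0 < lam1) (hlam2 : 0 < lam2) (hstab : lam1 + lam2 < 1)
    (hbeta : beta1 > beta2) (hbeta2 : beta2 > 0)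
    (D : ℝ → ℝ) (hD : ∀ g, D g = 1 / (1 - g))
    (U : ℝ → ℝ → ℝ)
    (hU : ∀ p1 p2 : ℝ,
      U p1 p2 = (p1 * lam1 * beta1 + p2 * lam2 * beta2) *
              (D (lam1 * p1 + lam2 * p2) -
               D (lam1 * (1 - p1) + lam2 * (1 - p2))) +
            (lam1 * beta1 + lam2 * beta2) *
              D (lam1 * (1 - p1) + lam2 * (1 - p2))) :
    HasDerivAt (fun p1 => U p1 (1/2)) 0 (1/2) ∧
    HasDerivAt (fun p2 => U (1/2) p2) 0 (1/2) := by
  have hne1 : 1 - (lam1 * (1/2) + lam2 * (1/2)) ≠ 0 := by nlinarith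
  have hne2 : 1 - (lam2 * (1/2) + lam1 * (1/2)) ≠ 0 := by nlinarith
  constructor
  · have h := aux_deriv lam1 lam2 beta1 ((1/2) * lam2 * beta2)
      (lam1 * beta1 + lam2 * beta2) hne1 (by ring)
    convert h using 1
    funext p
    rw [hU, hD, hD]
    simp only [one_div]
    try ring
  · have h := aux_deriv lam2 lam1 beta2 ((1/2) * lam1 * beta1)
      (lam1 * beta1 + lam2 * beta2) hne2 (by ring)
    convert h using 1
    funext p
    rw [hU, hD, hD]
    simp only [one_div]
    try ring
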